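/- Let k, n be positive integers with p·n ≤ k ≤ n and 0 < p < 1 with q = 1 - p, and set f = k/n. Then 1 ≤ L̄(n,k,p) ≤ B̄_{n,k}(p)/b_{n,k}(p) ≤ Ū(n,k,p) < 2·L̄(n,k,p), where all inequalities are strict when k ≤ n - 1. If in addition p < f < 1, then 1 < L̄(n,k,p) < B̄_{n,k}(p)/b_{n,k}(p) < Ū(n,k,p) ≤ V̄(n,k,p,0) < f·q/(f-p). -/
import Mathlib


open Real Finset

/-- Binomial probability `b_{n,k}(p)`. -/
noncomputable def b (n k : ℕ) (p : ℝ) : ℝ :=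
  (n.choose k : ℝ) * p ^ k * (1 - p) ^ (n - k)

/-- Upper tail probability `B̄_{n,k}(p) = ∑_{j=k}^n C(n,j) p^j (1-p)^(n-j)`. -/
noncomputable def Bbar (n k : ℕ) (p : ℝ) : ℝ :=
  ∑ j ∈ Finset.Icc k n, (n.choose j : ℝ) * p ^ j * (1 - p) ^ (n - j)

noncomputable def V (n k p a : ℝ) : ℝ :=
  a + p * (n - k + a + 1) / (p * n + p - k + a)

noncomputable def U (n k p : ℝ) : ℝ := ⨅ a : ℕ, V n k p (a : ℝ)

/-- `L̄(n,k,p) = (pn - k + 1 + √((pn - k + 1)² + 4qk))/2`. -/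
noncomputable def Lbar (n k p : ℝ) : ℝ :=
  (p * n - k + 1 + Real.sqrt ((p * n - k + 1) ^ 2 + 4 * (1 - p) * k)) / 2

/-- `V̄(n,k,p,a) = V(n, n-k, 1-p, a)`. -/
noncomputable def Vbar (n k p a : ℝ) : ℝ := V n (n - k) (1 - p) a

/-- `Ū(n,k,p) = U(n, n-k, 1-p)`. -/
noncomputable def Ubar (n k p : ℝ) : ℝ := U n (n - k) (1 - p)

section aux
variable {n : ℕ} {p : ℝ}

lemma b_nonneg (hp0 : 0 < p) (hp1 : p < 1) (j : ℕ) : 0 ≤ b n j p := by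
  have h1 : (0:ℝ) ≤ 1 - p := by linarith
  have h2 : (0:ℝ) ≤ (n.choose j : ℝ) := Nat.cast_nonneg _
  have h3 : (0:ℝ) ≤ p := le_of_lt hp0
  unfold b; positivity

lemma b_pos (hp0 : 0 < p) (hp1 : p < 1) {j : ℕ} (hj : j ≤ n) : 0 < b n j p := by
  have h1 : (0:ℝ) < 1 - p := by linarith
  have h2 : (0:ℝ) < (n.choose j : ℝ) := by
    exact_mod_cast Nat.choose_pos hj
  unfold b; positivity

lemma b_eq_zero {j : ℕ} (hj : n < j) : b n j p = 0 := by
  unfold b; simp [Nat.choose_eq_zero_of_lt hj]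

lemma b_step (m : ℕ) :
    ((m:ℝ)+1) * ((1-p) * b n (m+1) p) = ((n-m : ℕ):ℝ) * (p * b n m p) := by
  rcases le_or_gt (m+1) n with h | h
  · have hcn : (m+1) * n.choose (m+1) = (n-m) * n.choose m := by
      rw [Nat.mul_comm, Nat.choose_succ_right_eq, Nat.mul_comm]
    have hc : ((m:ℝ)+1) * (n.choose (m+1) : ℝ)
        = (((n-(m+1):ℕ):ℝ)+1) * (n.choose m : ℝ) := by
      have h2 : ((n-m:ℕ):ℝ) = ((n-(m+1):ℕ):ℝ)+1 := by
        have : n - m = (n - (m+1)) + 1 := by omega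
        rw [this]; push_cast; ring
      rw [← h2]; exact_mod_cast hcn
    have hnm : n - m = (n - (m+1)) + 1 := by omega
    have h2 : ((n-m:ℕ):ℝ) = ((n-(m+1):ℕ):ℝ)+1 := by
      rw [hnm]; push_cast; ring
    unfold b
    rw [hnm, pow_succ, pow_succ]; push_cast
    linear_combination (p^m * p * (1-p) * (1-p)^(n-(m+1))) * hc
  · have h1 : n.choose (m+1) = 0 := Nat.choose_eq_zero_of_lt h
    have h2 : n - m = 0 := by omega
    unfold b; rw [h1, h2]; simp

/-- the ratio `b_{m+1}/b_m`. -/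
noncomputable def rr (n : ℕ) (p : ℝ) (m : ℕ) : ℝ :=
  ((n-m : ℕ):ℝ) * p / (((m:ℝ)+1) * (1-p))

lemma b_succ (hp1 : p < 1) (m : ℕ) : b n (m+1) p = rr n p m * b n m p := by
  have hq : (0:ℝ) < 1 - p := by linarith
  have hden : (((m:ℝ)+1) * (1-p)) ≠ 0 := by positivity
  unfold rr
  rw [div_mul_eq_mul_div, eq_div_iff hden]
  have := b_step (n := n) (p := p) m
  linarith [this]

lemma rr_nonneg (hp0 : 0 < p) (hp1 : p < 1) (m : ℕ) : 0 ≤ rr n p m := by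
  have hq : (0:ℝ) < 1 - p := by linarith
  have h2 : (0:ℝ) ≤ ((n-m:ℕ):ℝ) := Nat.cast_nonneg _
  unfold rr; positivity

lemma rr_anti (hp0 : 0 < p) (hp1 : p < 1) {i j : ℕ} (hij : i ≤ j) :
    rr n p j ≤ rr n p i := by
  have hq : (0:ℝ) < 1 - p := by linarith
  unfold rr
  apply div_le_div₀ (by positivity)
  · have : (n - j : ℕ) ≤ (n - i : ℕ) := Nat.sub_le_sub_left hij n
    have : ((n-j:ℕ):ℝ) ≤ ((n-i:ℕ):ℝ) := by exact_mod_cast this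
    nlinarith
  · positivity
  · have : ((i:ℝ)+1) ≤ ((j:ℝ)+1) := by exact_mod_cast by omega
    nlinarith

lemma rr_lt_one (hp0 : 0 < p) (hp1 : p < 1) {k m : ℕ} (hpk : p * n ≤ (k:ℝ))
    (hkm : k ≤ m) : rr n p m < 1 := by
  have hq : (0:ℝ) < 1 - p := by linarith
  rw [rr, div_lt_one (by positivity)]
  have hm : ((n-m:ℕ):ℝ) ≤ (n:ℝ) - (m:ℝ) ∨ ((n-m:ℕ):ℝ) = 0 := by
    rcases le_or_gt m n with h | h
    · left
      have : ((n-m:ℕ):ℝ) = (n:ℝ) - (m:ℝ) := by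
        have : (n:ℝ) - (m:ℝ) = ((n - m : ℕ):ℝ) := by
          rw [Nat.cast_sub h]
        linarith
      linarith
    · right; simp [Nat.sub_eq_zero_of_le (le_of_lt h)]
  have hkm' : (k:ℝ) ≤ (m:ℝ) := by exact_mod_cast hkm
  rcases hm with h | h
  · nlinarith
  · rw [h, zero_mul]; positivity

lemma b_anti (hp0 : 0 < p) (hp1 : p < 1) {k i j : ℕ} (hpk : p * n ≤ (k:ℝ))
    (hki : k ≤ i) (hij : i ≤ j) : b n j p ≤ b n i p := by
  induction j with
  | zero => interval_cases i; exact le_refl _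
  | succ m ih =>
    rcases Nat.lt_or_ge i (m+1) with h | h
    · have h1 : b n m p ≤ b n i p := ih (by omega)
      have h2 : b n (m+1) p ≤ b n m p := by
        rw [b_succ hp1]
        have hr : rr n p m < 1 := rr_lt_one hp0 hp1 hpk (by omega)
        nlinarith [b_nonneg (n := n) hp0 hp1 m, rr_nonneg (n := n) hp0 hp1 m]
      linarith
    · have : i = m + 1 := by omega
      rw [this]

lemma b_anti_strict (hp0 : 0 < p) (hp1 : p < 1) {k i j : ℕ} (hpk : p * n ≤ (k:ℝ))
    (hki : k ≤ i) (hij : i < j) (hjn : j ≤ n) : b n j p < b n i p := by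
  have h1 : b n j p ≤ b n (i+1) p := b_anti hp0 hp1 hpk (by omega) (by omega)
  have h2 : b n (i+1) p < b n i p := by
    rw [b_succ hp1]
    have hr : rr n p i < 1 := rr_lt_one hp0 hp1 hpk hki
    nlinarith [b_pos (n := n) hp0 hp1 (show i ≤ n by omega), rr_nonneg (n := n) hp0 hp1 i]
  linarith

lemma b_geom (hp0 : 0 < p) (hp1 : p < 1) (a : ℕ) :
    ∀ t : ℕ, b n (a+t) p ≤ b n a p * (rr n p a)^t := by
  intro t
  induction t with
  | zero => simp
  | succ s ih =>
    have : b n (a+(s+1)) p = rr n p (a+s) * b n (a+s) p := by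
      rw [show a+(s+1) = (a+s)+1 by omega, b_succ hp1]
    rw [this, pow_succ]
    have h1 : rr n p (a+s) ≤ rr n p a := rr_anti hp0 hp1 (by omega)
    have h2 : 0 ≤ rr n p (a+s) := rr_nonneg hp0 hp1 _
    have h3 : 0 ≤ b n (a+s) p := b_nonneg hp0 hp1 _
    have h4 : 0 ≤ b n a p := b_nonneg hp0 hp1 _
    have h5 : 0 ≤ rr n p a := rr_nonneg hp0 hp1 _
    calc rr n p (a+s) * b n (a+s) p ≤ rr n p a * (b n a p * (rr n p a)^s) := by
          apply mul_le_mul h1 ih h3 h5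
      _ = b n a p * ((rr n p a)^s * rr n p a) := by ring

/-- log-concavity / submultiplicativity -/
lemma b_submult (hp0 : 0 < p) (hp1 : p < 1) (k : ℕ) :
    ∀ i j : ℕ, b n (k+i+j) p * b n k p ≤ b n (k+i) p * b n (k+j) p := by
  intro i
  induction i with
  | zero => intro j; simp [mul_comm]
  | succ s ih =>
    intro j
    have e1 : b n (k+(s+1)+j) p = rr n p (k+s+j) * b n (k+s+j) p := by
      rw [show k+(s+1)+j = (k+s+j)+1 by omega, b_succ hp1]
    have e2 : b n (k+(s+1)) p = rr n p (k+s) * b n (k+s) p := by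
      rw [show k+(s+1) = (k+s)+1 by omega, b_succ hp1]
    rw [e1, e2]
    have h1 : rr n p (k+s+j) ≤ rr n p (k+s) := rr_anti hp0 hp1 (by omega)
    have h2 : 0 ≤ rr n p (k+s+j) := rr_nonneg hp0 hp1 _
    have h3 := ih j
    have h4 : 0 ≤ b n (k+s+j) p * b n k p :=
      mul_nonneg (b_nonneg hp0 hp1 _) (b_nonneg hp0 hp1 _)
    have h5 : 0 ≤ b n (k+s) p * b n (k+j) p :=
      mul_nonneg (b_nonneg hp0 hp1 _) (b_nonneg hp0 hp1 _)
    calc rr n p (k+s+j) * b n (k+s+j) p * b n k p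
        = rr n p (k+s+j) * (b n (k+s+j) p * b n k p) := by ring
      _ ≤ rr n p (k+s) * (b n (k+s) p * b n (k+j) p) := by
          apply mul_le_mul h1 h3 h4 (rr_nonneg hp0 hp1 _)
      _ = rr n p (k+s) * b n (k+s) p * b n (k+j) p := by ring

lemma b_identity (hp1 : p < 1) {k : ℕ} (hkn : k ≤ n) :
    ∑ j ∈ Icc k n, (((j:ℝ) - p*n) * b n j p) = (k:ℝ)*(1-p)*b n k p := by
  set d : ℕ → ℝ := fun j => (j:ℝ)*(1-p)*b n j p with hd
  have hstep : ∀ j : ℕ, j ≤ n → ((j:ℝ) - p*n) * b n j p = d j - d (j+1) := by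
    intro j hj
    have h1 : d (j+1) = ((n-j:ℕ):ℝ) * (p * b n j p) := by
      simp only [hd]
      have := b_step (n := n) (p := p) j
      push_cast
      linarith
    have h2 : ((n-j:ℕ):ℝ) = (n:ℝ) - (j:ℝ) := by
      rw [Nat.cast_sub hj]
    rw [h1, h2]; simp only [hd]; ring
  have hIcc : Icc k n = Ico k (n+1) := by
    rw [Finset.Ico_add_one_right_eq_Icc]
  rw [hIcc, Finset.sum_Ico_eq_sum_range]
  have hcongr : ∀ i ∈ range (n+1-k),
      (((k+i:ℕ):ℝ) - p*n) * b n (k+i) p = d (k+i) - d ((k+i)+1) := by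
    intro i hi
    rw [mem_range] at hi
    exact hstep (k+i) (by omega)
  rw [Finset.sum_congr rfl hcongr]
  have := Finset.sum_range_sub' (fun i => d (k+i)) (n+1-k)
  simp only [← add_assoc] at this
  rw [this]
  have h1 : k + (n+1-k) = n+1 := by omega
  rw [h1]
  have h2 : d (n+1) = 0 := by
    simp only [hd, b_eq_zero (n := n) (p := p) (show n < n+1 by omega)]
    ring
  rw [h2]
  simp only [hd, Nat.cast_add, Nat.add_zero, add_zero, sub_zero]

lemma pair_le (hp0 : 0 < p) (hp1 : p < 1) {k : ℕ} (hkn : k ≤ n) :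
    (∑ i ∈ range (n-k+1), (i:ℝ) * b n (k+i) p) * b n k p
      ≤ (∑ i ∈ range (n-k+1), b n (k+i) p) * (∑ j ∈ Icc 1 (n-k), b n (k+j) p) := by
  set m := n - k with hm
  have step1 : (∑ t ∈ range (m+1), (t:ℝ) * b n (k+t) p) * b n k p
      = ∑ t ∈ range (m+1), ∑ i ∈ range t, b n (k+t) p * b n k p := by
    rw [Finset.sum_mul]
    apply Finset.sum_congr rfl
    intro t _
    rw [Finset.sum_const, Finset.card_range, nsmul_eq_mul]
    ring
  have step2 : ∑ t ∈ range (m+1), ∑ i ∈ range t, b n (k+t) p * b n k p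
      ≤ ∑ t ∈ range (m+1), ∑ i ∈ range t, b n (k+i) p * b n (k+(t-i)) p := by
    apply Finset.sum_le_sum
    intro t _
    apply Finset.sum_le_sum
    intro i hi
    rw [mem_range] at hi
    have := b_submult (n := n) hp0 hp1 k i (t-i)
    have ht : k + i + (t-i) = k + t := by omega
    rw [ht] at this
    exact this
  have step3 : ∑ t ∈ range (m+1), ∑ i ∈ range t, b n (k+i) p * b n (k+(t-i)) p
      = ∑ i ∈ range (m+1), ∑ t ∈ Icc (i+1) m, b n (k+i) p * b n (k+(t-i)) p := by
    apply Finset.sum_comm'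
    intro t i
    simp only [mem_range, mem_Icc]
    omega
  have step4 : ∀ i ∈ range (m+1),
      ∑ t ∈ Icc (i+1) m, b n (k+i) p * b n (k+(t-i)) p
        ≤ b n (k+i) p * (∑ j ∈ Icc 1 m, b n (k+j) p) := by
    intro i hi
    rw [mem_range] at hi
    rw [← Finset.mul_sum]
    apply mul_le_mul_of_nonneg_left _ (b_nonneg hp0 hp1 _)
    have hmap : Icc (i+1) m = Finset.map (addLeftEmbedding i) (Icc 1 (m-i)) := by
      rw [Finset.map_add_left_Icc]
      congr 1 <;> omega
    rw [hmap, Finset.sum_map]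
    have : ∀ j ∈ Icc 1 (m-i), b n (k+((addLeftEmbedding i) j - i)) p = b n (k+j) p := by
      intro j hj
      congr 1
      simp only [addLeftEmbedding_apply]
      omega
    rw [Finset.sum_congr rfl this]
    apply Finset.sum_le_sum_of_subset_of_nonneg
    · apply Finset.Icc_subset_Icc_right; omega
    · intro j _ _; exact b_nonneg hp0 hp1 _
  calc (∑ t ∈ range (m+1), (t:ℝ) * b n (k+t) p) * b n k p
      = ∑ t ∈ range (m+1), ∑ i ∈ range t, b n (k+t) p * b n k p := step1
    _ ≤ ∑ t ∈ range (m+1), ∑ i ∈ range t, b n (k+i) p * b n (k+(t-i)) p := step2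
    _ = ∑ i ∈ range (m+1), ∑ t ∈ Icc (i+1) m, b n (k+i) p * b n (k+(t-i)) p := step3
    _ ≤ ∑ i ∈ range (m+1), b n (k+i) p * (∑ j ∈ Icc 1 m, b n (k+j) p) :=
        Finset.sum_le_sum step4
    _ = (∑ i ∈ range (m+1), b n (k+i) p) * (∑ j ∈ Icc 1 m, b n (k+j) p) := by
        rw [← Finset.sum_mul]

lemma pair_lt (hp0 : 0 < p) (hp1 : p < 1) {k : ℕ} (hkn : k < n) :
    (∑ i ∈ range (n-k+1), (i:ℝ) * b n (k+i) p) * b n k p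
      < (∑ i ∈ range (n-k+1), b n (k+i) p) * (∑ j ∈ Icc 1 (n-k), b n (k+j) p) := by
  set m := n - k with hm
  have hm1 : 1 ≤ m := by omega
  have step1 : (∑ t ∈ range (m+1), (t:ℝ) * b n (k+t) p) * b n k p
      = ∑ t ∈ range (m+1), ∑ i ∈ range t, b n (k+t) p * b n k p := by
    rw [Finset.sum_mul]
    apply Finset.sum_congr rfl
    intro t _
    rw [Finset.sum_const, Finset.card_range, nsmul_eq_mul]
    ring
  have step2 : ∑ t ∈ range (m+1), ∑ i ∈ range t, b n (k+t) p * b n k p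
      ≤ ∑ t ∈ range (m+1), ∑ i ∈ range t, b n (k+i) p * b n (k+(t-i)) p := by
    apply Finset.sum_le_sum
    intro t _
    apply Finset.sum_le_sum
    intro i hi
    rw [mem_range] at hi
    have := b_submult (n := n) hp0 hp1 k i (t-i)
    have ht : k + i + (t-i) = k + t := by omega
    rw [ht] at this
    exact this
  have step3 : ∑ t ∈ range (m+1), ∑ i ∈ range t, b n (k+i) p * b n (k+(t-i)) p
      = ∑ i ∈ range (m+1), ∑ t ∈ Icc (i+1) m, b n (k+i) p * b n (k+(t-i)) p := by
    apply Finset.sum_comm'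
    intro t i
    simp only [mem_range, mem_Icc]
    omega
  have step4 : ∀ i ∈ range (m+1),
      ∑ t ∈ Icc (i+1) m, b n (k+i) p * b n (k+(t-i)) p
        ≤ b n (k+i) p * (∑ j ∈ Icc 1 m, b n (k+j) p) := by
    intro i hi
    rw [mem_range] at hi
    rw [← Finset.mul_sum]
    apply mul_le_mul_of_nonneg_left _ (b_nonneg hp0 hp1 _)
    have hmap : Icc (i+1) m = Finset.map (addLeftEmbedding i) (Icc 1 (m-i)) := by
      rw [Finset.map_add_left_Icc]
      congr 1 <;> omega
    rw [hmap, Finset.sum_map]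
    have : ∀ j ∈ Icc 1 (m-i), b n (k+((addLeftEmbedding i) j - i)) p = b n (k+j) p := by
      intro j hj
      congr 1
      simp only [addLeftEmbedding_apply]
      omega
    rw [Finset.sum_congr rfl this]
    apply Finset.sum_le_sum_of_subset_of_nonneg
    · apply Finset.Icc_subset_Icc_right; omega
    · intro j _ _; exact b_nonneg hp0 hp1 _
  have step5 : ∑ i ∈ range (m+1), ∑ t ∈ Icc (i+1) m, b n (k+i) p * b n (k+(t-i)) p
      < ∑ i ∈ range (m+1), b n (k+i) p * (∑ j ∈ Icc 1 m, b n (k+j) p) := by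
    apply Finset.sum_lt_sum step4
    refine ⟨m, by simp, ?_⟩
    have hempty : Icc (m+1) m = (∅ : Finset ℕ) := by
      apply Finset.Icc_eq_empty; omega
    rw [hempty, Finset.sum_empty]
    have h1 : 0 < b n (k+m) p := b_pos hp0 hp1 (by omega)
    have h2 : 0 < ∑ j ∈ Icc 1 m, b n (k+j) p := by
      apply Finset.sum_pos' (fun j _ => b_nonneg hp0 hp1 _)
      exact ⟨1, by simp [hm1], b_pos hp0 hp1 (by omega)⟩
    positivity
  calc (∑ t ∈ range (m+1), (t:ℝ) * b n (k+t) p) * b n k p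
      = ∑ t ∈ range (m+1), ∑ i ∈ range t, b n (k+t) p * b n k p := step1
    _ ≤ ∑ t ∈ range (m+1), ∑ i ∈ range t, b n (k+i) p * b n (k+(t-i)) p := step2
    _ = ∑ i ∈ range (m+1), ∑ t ∈ Icc (i+1) m, b n (k+i) p * b n (k+(t-i)) p := step3
    _ < ∑ i ∈ range (m+1), b n (k+i) p * (∑ j ∈ Icc 1 m, b n (k+j) p) := step5
    _ = (∑ i ∈ range (m+1), b n (k+i) p) * (∑ j ∈ Icc 1 m, b n (k+j) p) := by
        rw [← Finset.sum_mul]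

lemma upper_strict (hp0 : 0 < p) (hp1 : p < 1) {k : ℕ} (a : ℕ) (hkn : k < n)
    (hpk : p*n ≤ (k:ℝ)) :
    ∑ i ∈ range (n-k+1), b n (k+i) p
      < ((a:ℝ) + (1-p)*((k:ℝ)+(a:ℝ)+1)/((k:ℝ)+(a:ℝ)+1-p*((n:ℝ)+1))) * b n k p := by
  set m := n - k with hm
  have hm1 : 1 ≤ m := by omega
  have hq : (0:ℝ) < 1 - p := by linarith
  have ha0 : (0:ℝ) ≤ (a:ℝ) := Nat.cast_nonneg a
  set D : ℝ := (k:ℝ)+(a:ℝ)+1-p*((n:ℝ)+1) with hD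
  have hDpos : 0 < D := by
    have h1 : p*((n:ℝ)+1) = p*n + p := by ring
    rw [hD, h1]
    have : p < 1 := hp1
    nlinarith
  set Q : ℝ := (1-p)*((k:ℝ)+(a:ℝ)+1)/D with hQdef
  have hQpos : 0 < Q := by
    rw [hQdef]
    have : (0:ℝ) < (k:ℝ)+(a:ℝ)+1 := by positivity
    positivity
  have hc0 : 0 < b n k p := b_pos hp0 hp1 (by omega)
  have hanti : ∀ i : ℕ, b n (k+i) p ≤ b n k p := by
    intro i
    exact b_anti hp0 hp1 hpk (le_refl k) (by omega)
  rcases le_or_gt a m with ha | ha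
  · -- a ≤ m
    set M := m + 1 - a with hM
    have hM1 : 1 ≤ M := by omega
    have hsplit : ∑ i ∈ range (m+1), b n (k+i) p
        = ∑ i ∈ Ico 0 a, b n (k+i) p + ∑ i ∈ Ico a (m+1), b n (k+i) p := by
      rw [Finset.range_eq_Ico, ← Finset.sum_Ico_consecutive _ (Nat.zero_le a) (by omega)]
    have hS1 : ∑ i ∈ Ico 0 a, b n (k+i) p ≤ (a:ℝ) * b n k p := by
      have := Finset.sum_le_card_nsmul (Ico 0 a) (fun i => b n (k+i) p) (b n k p)
        (fun i _ => hanti i)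
      simpa [Nat.card_Ico, nsmul_eq_mul] using this
    set ρ : ℝ := rr n p (k+a) with hρ
    have hρ0 : 0 ≤ ρ := rr_nonneg hp0 hp1 _
    have hρ1 : ρ < 1 := rr_lt_one hp0 hp1 hpk (by omega)
    set G : ℝ := ∑ t ∈ range M, ρ^t with hG
    have hgs : G * (ρ - 1) = ρ^M - 1 := geom_sum_mul ρ M
    have hGnn : 0 ≤ G := Finset.sum_nonneg fun t _ => pow_nonneg hρ0 t
    have hS2a : ∑ i ∈ Ico a (m+1), b n (k+i) p ≤ b n (k+a) p * G := by
      rw [Finset.sum_Ico_eq_sum_range, hG, Finset.mul_sum]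
      have hMM : m + 1 - a = M := rfl
      rw [hMM]
      apply Finset.sum_le_sum
      intro t _
      have := b_geom (n := n) hp0 hp1 (k+a) t
      have he : k + (a + t) = (k + a) + t := by omega
      rw [he]
      exact this
    have hcast : ((n-(k+a):ℕ):ℝ) = (n:ℝ)-(k:ℝ)-(a:ℝ) := by
      rw [Nat.cast_sub (by omega)]
      push_cast; ring
    have h1ρ : 1 - ρ = D / (((k:ℝ)+(a:ℝ)+1)*(1-p)) := by
      rw [hρ, rr, hcast, hD]
      push_cast
      field_simp
      ring
    have hden : (0:ℝ) < ((k:ℝ)+(a:ℝ)+1)*(1-p) := by positivity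
    have h1ρpos : 0 < 1 - ρ := by linarith
    have hinv : 1 / (1-ρ) = Q := by
      rw [h1ρ, hQdef, one_div_div]
      ring
    have hGle : G ≤ 1/(1-ρ) := by
      rw [le_div_iff₀ h1ρpos]
      have : 0 ≤ ρ^M := pow_nonneg hρ0 M
      nlinarith
    rcases Nat.eq_zero_or_pos a with haz | hap
    · -- a = 0 : strict via geometric
      have hρpos : 0 < ρ := by
        rw [hρ, rr]
        have h1 : (0:ℝ) < ((n-(k+a):ℕ):ℝ) := by
          have : 0 < n - (k+a) := by omega
          exact_mod_cast this
        positivity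
      have hGlt : G < 1/(1-ρ) := by
        rw [lt_div_iff₀ h1ρpos]
        have : 0 < ρ^M := pow_pos hρpos M
        nlinarith
      have hba : 0 < b n (k+a) p := b_pos hp0 hp1 (by omega)
      have hS2 : ∑ i ∈ Ico a (m+1), b n (k+i) p < b n (k+a) p * (1/(1-ρ)) :=
        lt_of_le_of_lt hS2a (mul_lt_mul_of_pos_left hGlt hba)
      have hfin : b n (k+a) p * (1/(1-ρ)) ≤ b n k p * Q := by
        rw [hinv]
        exact mul_le_mul_of_nonneg_right (hanti a) (le_of_lt hQpos)
      have hexp : ((a:ℝ) + Q) * b n k p = (a:ℝ) * b n k p + b n k p * Q := by ring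
      rw [hsplit, hexp]
      linarith
    · -- a ≥ 1 : strict via b (k+a) < b k
      have hba : b n (k+a) p < b n k p := b_anti_strict hp0 hp1 hpk (le_refl k)
        (by omega) (by omega)
      have hS2 : ∑ i ∈ Ico a (m+1), b n (k+i) p ≤ b n (k+a) p * (1/(1-ρ)) := by
        calc ∑ i ∈ Ico a (m+1), b n (k+i) p ≤ b n (k+a) p * G := hS2a
          _ ≤ b n (k+a) p * (1/(1-ρ)) :=
            mul_le_mul_of_nonneg_left hGle (b_nonneg hp0 hp1 _)
      have hfin : b n (k+a) p * (1/(1-ρ)) < b n k p * Q := by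
        rw [hinv]
        exact mul_lt_mul_of_pos_right hba hQpos
      have hexp : ((a:ℝ) + Q) * b n k p = (a:ℝ) * b n k p + b n k p * Q := by ring
      rw [hsplit, hexp]
      linarith
  · -- a > m
    have hle : ∑ i ∈ range (m+1), b n (k+i) p ≤ ((m:ℝ)+1) * b n k p := by
      have := Finset.sum_le_card_nsmul (range (m+1)) (fun i => b n (k+i) p) (b n k p)
        (fun i _ => hanti i)
      simpa [Finset.card_range, nsmul_eq_mul] using this
    have ham : ((m:ℝ)+1) ≤ (a:ℝ) := by exact_mod_cast ha
    have hlt : (a:ℝ) < (a:ℝ) + Q := by linarith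
    calc ∑ i ∈ range (m+1), b n (k+i) p ≤ ((m:ℝ)+1) * b n k p := hle
      _ ≤ (a:ℝ) * b n k p := mul_le_mul_of_nonneg_right ham (le_of_lt hc0)
      _ < ((a:ℝ) + Q) * b n k p := mul_lt_mul_of_pos_right hlt hc0

end aux


lemma Vbar_eq (n k : ℕ) (p : ℝ) (a : ℕ) :
    Vbar (n:ℝ) (k:ℝ) p (a:ℝ) = (a:ℝ) +
      (1-p)*((k:ℝ)+(a:ℝ)+1)/((k:ℝ)+(a:ℝ)+1-p*((n:ℝ)+1)) := by
  rw [Vbar, V]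
  congr 1
  · congr 1
    · ring
    · ring

lemma Ubar_eq (n k : ℕ) (p : ℝ) :
    Ubar (n:ℝ) (k:ℝ) p = ⨅ a : ℕ, Vbar (n:ℝ) (k:ℝ) p (a:ℝ) := rfl


section LbarFacts
variable {p kR nR : ℝ}

lemma L_sqrt_facts (hp0 : 0 < p) (hp1 : p < 1) (hk0 : 0 < kR) :
    0 ≤ Real.sqrt ((p*nR - kR + 1)^2 + 4*(1-p)*kR) ∧
    (Real.sqrt ((p*nR - kR + 1)^2 + 4*(1-p)*kR))^2 = (p*nR - kR + 1)^2 + 4*(1-p)*kR := by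
  constructor
  · exact Real.sqrt_nonneg _
  · apply Real.sq_sqrt
    have hq : (0:ℝ) < 1 - p := by linarith
    positivity

lemma L_quad (hp0 : 0 < p) (hp1 : p < 1) (hk0 : 0 < kR) :
    (Lbar nR kR p)^2 = (p*nR - kR + 1)*(Lbar nR kR p) + (1-p)*kR := by
  obtain ⟨hs0, hs2⟩ := L_sqrt_facts (nR := nR) hp0 hp1 hk0
  rw [Lbar]
  linear_combination hs2/4

lemma L_ge_one (hp0 : 0 < p) (hp1 : p < 1) (hk0 : 0 < kR) (hkn : kR ≤ nR) :
    1 ≤ Lbar nR kR p := by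
  obtain ⟨hs0, hs2⟩ := L_sqrt_facts (nR := nR) hp0 hp1 hk0
  rw [Lbar]
  nlinarith [hs0, hs2, mul_nonneg hp0.le (sub_nonneg.2 hkn)]

lemma L_gt_one (hp0 : 0 < p) (hp1 : p < 1) (hk0 : 0 < kR) (hkn : kR < nR) :
    1 < Lbar nR kR p := by
  obtain ⟨hs0, hs2⟩ := L_sqrt_facts (nR := nR) hp0 hp1 hk0
  rw [Lbar]
  nlinarith [hs0, hs2, mul_pos hp0 (sub_pos.2 hkn)]

lemma L_le_S {S : ℝ} (hp0 : 0 < p) (hp1 : p < 1) (hk0 : 0 < kR) (hS1 : 1 ≤ S)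
    (hquad : kR*(1-p) + (p*nR - kR)*S + S ≤ S^2) : Lbar nR kR p ≤ S := by
  obtain ⟨hs0, hs2⟩ := L_sqrt_facts (nR := nR) hp0 hp1 hk0
  set s := Real.sqrt ((p*nR - kR + 1)^2 + 4*(1-p)*kR) with hsdef
  clear_value s
  set β : ℝ := p*nR - kR + 1 with hβ
  have hqk : (0:ℝ) < (1-p)*kR := by
    have hq : (0:ℝ) < 1 - p := by linarith
    positivity
  have hquad' : (1-p)*kR + β*S ≤ S^2 := by rw [hβ]; nlinarith [hquad]
  have hSβ : 0 < 2*S - β := by nlinarith [hquad', hqk, hS1]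
  have h3 : s^2 ≤ (2*S - β)^2 := by nlinarith [hquad', hs2]
  have h4 : s ≤ 2*S - β := by nlinarith [hs0, h3, hSβ]
  rw [Lbar, ← hβ, ← hsdef]
  linarith

lemma L_lt_S {S : ℝ} (hp0 : 0 < p) (hp1 : p < 1) (hk0 : 0 < kR) (hS1 : 1 ≤ S)
    (hquad : kR*(1-p) + (p*nR - kR)*S + S < S^2) : Lbar nR kR p < S := by
  obtain ⟨hs0, hs2⟩ := L_sqrt_facts (nR := nR) hp0 hp1 hk0
  set s := Real.sqrt ((p*nR - kR + 1)^2 + 4*(1-p)*kR) with hsdef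
  clear_value s
  set β : ℝ := p*nR - kR + 1 with hβ
  have hqk : (0:ℝ) < (1-p)*kR := by
    have hq : (0:ℝ) < 1 - p := by linarith
    positivity
  have hquad' : (1-p)*kR + β*S < S^2 := by rw [hβ]; nlinarith [hquad]
  have hSβ : 0 < 2*S - β := by nlinarith [hquad', hqk, hS1]
  have h3 : s^2 < (2*S - β)^2 := by nlinarith [hquad', hs2]
  have h4 : s < 2*S - β := by nlinarith [hs0, h3, hSβ]
  rw [Lbar, ← hβ, ← hsdef]
  linarith

lemma frac_le_L {aR : ℝ} (hp0 : 0 < p) (hp1 : p < 1) (hk0 : 0 < kR)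
    (hpk : p * nR ≤ kR) (hkn : kR ≤ nR)
    (haD : 0 < kR + aR + 1 - p*(nR+1))
    (halow : Lbar nR kR p - 1 ≤ aR) :
    (1-p)*(kR+aR+1)/(kR+aR+1-p*(nR+1)) ≤ Lbar nR kR p := by
  have hL1 : 1 ≤ Lbar nR kR p := L_ge_one hp0 hp1 hk0 (by nlinarith)
  have hLq := L_quad (nR := nR) hp0 hp1 hk0
  set L := Lbar nR kR p with hL
  rw [div_le_iff₀ haD]
  nlinarith [hLq, mul_nonneg (show (0:ℝ) ≤ L - (1-p) by linarith)
    (show (0:ℝ) ≤ aR - (L-1) by linarith)]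

end LbarFacts


lemma V0_bound {p kR nR : ℝ} (hp0 : 0 < p) (hp1 : p < 1) (hn0 : 0 < nR)
    (hkltR : kR < nR) (hpf : p < kR/nR) (hf1 : kR/nR < 1)
    (hD0 : 0 < kR+1-p*(nR+1)) :
    (1-p)*(kR+1)/(kR+1-p*(nR+1)) < (kR/nR)*(1-p)/(kR/nR - p) := by
  have hq : (0:ℝ) < 1 - p := by linarith
  have hfp : (0:ℝ) < kR/nR - p := sub_pos.2 hpf
  rw [div_lt_div_iff₀ hD0 hfp]
  have hexp : kR/nR * nR = kR := by field_simp
  nlinarith [hexp, mul_pos (mul_pos hq hp0) (sub_pos.2 hf1)]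

theorem upper_tail_ratio_bounds
    (k n : ℕ) (hk : 0 < k) (hn : 0 < n) (hkn : k ≤ n)
    (p : ℝ) (hp0 : 0 < p) (hp1 : p < 1) (hpk : p * n ≤ (k : ℝ)) :
    (1 ≤ Lbar n k p ∧ Lbar n k p ≤ Bbar n k p / b n k p ∧
      Bbar n k p / b n k p ≤ Ubar n k p ∧ Ubar n k p < 2 * Lbar n k p) ∧
    (k < n →
      (1 < Lbar n k p ∧ Lbar n k p < Bbar n k p / b n k p ∧
        Bbar n k p / b n k p < Ubar n k p ∧ Ubar n k p < 2 * Lbar n k p)) ∧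
    (p < (k : ℝ) / n → (k : ℝ) / n < 1 →
      (1 < Lbar n k p ∧ Lbar n k p < Bbar n k p / b n k p ∧
        Bbar n k p / b n k p < Ubar n k p ∧ Ubar n k p ≤ Vbar n k p 0 ∧
        Vbar n k p 0 < ((k : ℝ) / n) * (1 - p) / ((k : ℝ) / n - p))) := by
  have hq : (0:ℝ) < 1 - p := by linarith
  have hn0 : (0:ℝ) < (n:ℝ) := by exact_mod_cast hn
  have hk0 : (0:ℝ) < (k:ℝ) := by exact_mod_cast hk
  have hknR : (k:ℝ) ≤ (n:ℝ) := by exact_mod_cast hkn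
  set m := n - k with hm
  have hc0 : 0 < b n k p := b_pos hp0 hp1 hkn
  -- Bbar as a sum over range
  have hIcc : Icc k n = Ico k (n+1) := by rw [Finset.Ico_add_one_right_eq_Icc]
  have hBbar : Bbar n k p = ∑ i ∈ range (m+1), b n (k+i) p := by
    rw [Bbar, hIcc, Finset.sum_Ico_eq_sum_range]
    have h1 : n + 1 - k = m + 1 := by omega
    rw [h1]
    rfl
  set B := Bbar n k p with hBdef
  set S := B / b n k p with hSdef
  have hSc : B = S * b n k p := (div_mul_cancel₀ B (ne_of_gt hc0)).symm
  have hBlb : b n k p ≤ B := by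
    rw [hBbar]
    have h0 : b n (k+0) p ≤ ∑ i ∈ range (m+1), b n (k+i) p :=
      Finset.single_le_sum (fun i _ => b_nonneg hp0 hp1 _) (by simp)
    simpa using h0
  have hS1 : 1 ≤ S := by
    rw [hSdef, le_div_iff₀ hc0, one_mul]
    exact hBlb
  clear_value m B S
  -- identity
  have hIdent : (∑ i ∈ range (m+1), (i:ℝ) * b n (k+i) p)
      + ((k:ℝ) - p*n) * B = (k:ℝ)*(1-p)*b n k p := by
    have h1 := b_identity (n := n) (p := p) hp1 hkn
    rw [hIcc, Finset.sum_Ico_eq_sum_range] at h1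
    have h2 : n + 1 - k = m + 1 := by omega
    rw [h2] at h1
    have h3 : ∀ i ∈ range (m+1),
        (((k+i:ℕ):ℝ) - p*(n:ℝ)) * b n (k+i) p
          = (i:ℝ) * b n (k+i) p + ((k:ℝ) - p*n) * b n (k+i) p := by
      intro i _
      push_cast
      ring
    rw [Finset.sum_congr rfl h3, Finset.sum_add_distrib, ← Finset.mul_sum] at h1
    rw [hBbar]
    exact h1
  have hIcc1 : ∑ j ∈ Icc 1 m, b n (k+j) p = B - b n k p := by
    have h1 := Finset.sum_range_succ' (fun i => b n (k+i) p) m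
    have h2 : Icc 1 m = Ico 1 (m+1) := by rw [Finset.Ico_add_one_right_eq_Icc]
    rw [h2, Finset.sum_Ico_eq_sum_range]
    have h3 : m + 1 - 1 = m := by omega
    rw [h3]
    have h4 : ∀ i ∈ range m, b n (k+(1+i)) p = b n (k+(i+1)) p := by
      intro i _; congr 1; omega
    rw [Finset.sum_congr rfl h4]
    rw [hBbar, h1]
    simp
  -- the quadratic inequality
  have hquad : (k:ℝ)*(1-p) + (p*(n:ℝ) - k)*S + S ≤ S^2 := by
    have hpair := pair_le (n := n) (p := p) hp0 hp1 hkn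
    rw [← hm, hIcc1, ← hBbar] at hpair
    have hT : (∑ i ∈ range (m+1), (i:ℝ) * b n (k+i) p)
        = (k:ℝ)*(1-p)*b n k p - ((k:ℝ) - p*n) * B := by linarith
    rw [hT, hSc] at hpair
    nlinarith [hpair, hc0, mul_pos hc0 hc0]
  have hquads : k < n → (k:ℝ)*(1-p) + (p*(n:ℝ) - k)*S + S < S^2 := by
    intro hklt
    have hpair := pair_lt (n := n) (p := p) hp0 hp1 hklt
    rw [← hm, hIcc1, ← hBbar] at hpair
    have hT : (∑ i ∈ range (m+1), (i:ℝ) * b n (k+i) p)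
        = (k:ℝ)*(1-p)*b n k p - ((k:ℝ) - p*n) * B := by linarith
    rw [hT, hSc] at hpair
    nlinarith [hpair, hc0, mul_pos hc0 hc0]
  -- Lbar facts
  set L := Lbar (n:ℝ) (k:ℝ) p with hLL
  have hL1 : 1 ≤ L := by rw [hLL]; exact L_ge_one hp0 hp1 hk0 hknR
  have hL1s : k < n → 1 < L := by
    intro hklt
    rw [hLL]
    exact L_gt_one hp0 hp1 hk0 (by exact_mod_cast hklt)
  have hLS : L ≤ S := by rw [hLL]; exact L_le_S hp0 hp1 hk0 hS1 hquad
  have hLSs : k < n → L < S := by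
    intro hklt
    rw [hLL]
    exact L_lt_S hp0 hp1 hk0 hS1 (hquads hklt)
  -- Vbar positivity and lower bounds
  have hDpos : ∀ a : ℕ, (0:ℝ) < (k:ℝ)+(a:ℝ)+1-p*((n:ℝ)+1) := by
    intro a
    have ha0 : (0:ℝ) ≤ (a:ℝ) := Nat.cast_nonneg a
    nlinarith
  have hVgt : ∀ a : ℕ, (a:ℝ) < Vbar (n:ℝ) (k:ℝ) p (a:ℝ) := by
    intro a
    rw [Vbar_eq]
    have h1 := hDpos a
    have h2 : (0:ℝ) < (1-p)*((k:ℝ)+(a:ℝ)+1) := by positivity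
    have : 0 < (1-p)*((k:ℝ)+(a:ℝ)+1)/((k:ℝ)+(a:ℝ)+1-p*((n:ℝ)+1)) := by positivity
    linarith
  have hUbdd : BddBelow (Set.range fun a : ℕ => Vbar (n:ℝ) (k:ℝ) p (a:ℝ)) := by
    refine ⟨0, ?_⟩
    rintro x ⟨a, rfl⟩
    have := hVgt a
    have ha0 : (0:ℝ) ≤ (a:ℝ) := Nat.cast_nonneg a
    linarith
  -- upper bounds S ≤ Vbar a
  have hSVlt : k < n → ∀ a : ℕ, S < Vbar (n:ℝ) (k:ℝ) p (a:ℝ) := by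
    intro hklt a
    have h := upper_strict (n := n) (p := p) hp0 hp1 a hklt hpk
    rw [← hm, ← hBbar] at h
    rw [Vbar_eq, hSdef, div_lt_iff₀ hc0]
    exact h
  have hSV : ∀ a : ℕ, S ≤ Vbar (n:ℝ) (k:ℝ) p (a:ℝ) := by
    intro a
    rcases Nat.lt_or_ge k n with hklt | hge
    · exact le_of_lt (hSVlt hklt a)
    · -- k = n
      have hkeq : k = n := by omega
      have hSeq : S = 1 := by
        have hB1 : B = b n k p := by
          rw [hBbar]
          have hm0 : m = 0 := by omega
          rw [hm0]
          simp
        rw [hSdef, hB1, div_self (ne_of_gt hc0)]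
      rw [hSeq, Vbar_eq]
      rcases Nat.eq_zero_or_pos a with haz | hap
      · subst haz
        have hD := hDpos 0
        rw [Nat.cast_zero] at hD
        have hkR : (k:ℝ) = (n:ℝ) := by exact_mod_cast hkeq
        have heq : (1-p)*((k:ℝ)+(((0:ℕ)):ℝ)+1)/((k:ℝ)+(((0:ℕ)):ℝ)+1-p*((n:ℝ)+1)) = 1 := by
          rw [Nat.cast_zero, div_eq_one_iff_eq (ne_of_gt hD), hkR]
          ring
        rw [heq]
        norm_num
      · have ha1 : (1:ℝ) ≤ (a:ℝ) := by exact_mod_cast hap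
        have hD := hDpos a
        have : 0 < (1-p)*((k:ℝ)+(a:ℝ)+1)/((k:ℝ)+(a:ℝ)+1-p*((n:ℝ)+1)) := by
          have h2 : (0:ℝ) < (1-p)*((k:ℝ)+(a:ℝ)+1) := by positivity
          positivity
        linarith
  have hSU : S ≤ Ubar (n:ℝ) (k:ℝ) p := by
    rw [Ubar_eq]
    exact le_ciInf hSV
  have hSUs : k < n → S < Ubar (n:ℝ) (k:ℝ) p := by
    intro hklt
    rw [Ubar_eq]
    set A : ℕ := ⌈S⌉₊ + 1 with hA
    have hAne : (range A).Nonempty := ⟨0, by simp [hA]⟩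
    set w := (range A).inf' hAne (fun a => Vbar (n:ℝ) (k:ℝ) p (a:ℝ)) with hw
    have hwS : S < w := by
      obtain ⟨i, _, hieq⟩ := Finset.exists_mem_eq_inf' hAne
        (fun a => Vbar (n:ℝ) (k:ℝ) p (a:ℝ))
      rw [hw, hieq]
      exact hSVlt hklt i
    have hcS : S < min w (S+1) := lt_min hwS (by linarith)
    refine lt_of_lt_of_le hcS (le_ciInf ?_)
    intro a
    rcases Nat.lt_or_ge a A with haA | haA
    · exact le_trans (min_le_left _ _) (Finset.inf'_le _ (mem_range.mpr haA))
    · have h1 : (A:ℝ) ≤ (a:ℝ) := by exact_mod_cast haA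
      have h2 : S + 1 ≤ (A:ℝ) := by
        rw [hA]
        push_cast
        have := Nat.le_ceil S
        linarith
      have := hVgt a
      exact le_trans (min_le_right _ _) (by linarith)
  -- Ubar < 2 * Lbar
  have hU2L : Ubar (n:ℝ) (k:ℝ) p < 2 * L := by
    set a0 : ℕ := ⌈L⌉₊ - 1 with ha0
    have hceil1 : 1 ≤ ⌈L⌉₊ := by
      rw [Nat.one_le_ceil_iff]
      linarith
    have ha0cast : (a0:ℝ) = (⌈L⌉₊:ℝ) - 1 := by
      rw [ha0, Nat.cast_sub hceil1]
      norm_num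
    have ha0low : L - 1 ≤ (a0:ℝ) := by
      rw [ha0cast]
      have := Nat.le_ceil L
      linarith
    have ha0hi : (a0:ℝ) < L := by
      rw [ha0cast]
      have := Nat.ceil_lt_add_one (show (0:ℝ) ≤ L by linarith)
      linarith
    have hfrac : (1-p)*((k:ℝ)+(a0:ℝ)+1)/((k:ℝ)+(a0:ℝ)+1-p*((n:ℝ)+1)) ≤ L := by
      rw [hLL]
      exact frac_le_L hp0 hp1 hk0 hpk hknR (hDpos a0) (by rw [← hLL]; linarith)
    have hV0 : Vbar (n:ℝ) (k:ℝ) p ((a0:ℕ):ℝ) < 2*L := by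
      rw [Vbar_eq]
      linarith
    calc Ubar (n:ℝ) (k:ℝ) p ≤ Vbar (n:ℝ) (k:ℝ) p ((a0:ℕ):ℝ) := by
          rw [Ubar_eq]; exact ciInf_le hUbdd a0
      _ < 2*L := hV0
  refine ⟨⟨hL1, hLS, hSU, hU2L⟩, ?_, ?_⟩
  · intro hklt
    exact ⟨hL1s hklt, hLSs hklt, hSUs hklt, hU2L⟩
  · intro hpf hf1
    have hklt : k < n := by
      by_contra hcon
      have : k = n := by omega
      subst this
      rw [div_self (ne_of_gt hn0)] at hf1
      linarith
    have hpnk : p * (n:ℝ) < (k:ℝ) := by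
      have := (lt_div_iff₀ hn0).mp hpf
      linarith
    refine ⟨hL1s hklt, hLSs hklt, hSUs hklt, ?_, ?_⟩
    · have : Vbar (n:ℝ) (k:ℝ) p ((0:ℕ):ℝ) = Vbar (n:ℝ) (k:ℝ) p 0 := by norm_num
      rw [← this, Ubar_eq]
      exact ciInf_le hUbdd 0
    · have h0 : Vbar (n:ℝ) (k:ℝ) p 0 = (1-p)*((k:ℝ)+1)/((k:ℝ)+1-p*((n:ℝ)+1)) := by
        have := Vbar_eq n k p 0
        rw [Nat.cast_zero] at this
        rw [this]
        norm_num
      rw [h0]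
      have hD0 : (0:ℝ) < (k:ℝ)+1-p*((n:ℝ)+1) := by
        have := hDpos 0
        rw [Nat.cast_zero] at this
        linarith
      have hkltR : (k:ℝ) < (n:ℝ) := by exact_mod_cast hklt
      exact V0_bound hp0 hp1 hn0 hkltR hpf hf1 hD0
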